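/- Let a < 0 and let (x, z, θ) solve x' = cos θ, z' = sin θ, θ' = a sin θ/x with x > 0 and θ strictly decreasing with θ(s) → θ₁ ≥ 0 as s → ∞, where x is bounded below by a positive constant via (x')² = 1 + m x^{2a}, m < 0. Then x(s) → ∞ as s → ∞ when θ₁ ∈ [0, π/2) with cos θ₁ > 0; moreover θ'(s) → 0 and θ' is bounded, so the solution is defined on all of ℝ. -/

import Mathlib

open Real Filter Topology

/-- case b = 0, a < 0: if θ strictly decreases to θ₁ with
cos θ₁ > 0 and the first integral (x')² = 1 + m x^(2a) holds with m < 0, then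
x → ∞, θ' → 0, and θ' is bounded (so the solution is defined on all of ℝ). -/
theorem catenoid_asymptotics (a m θ₁ : ℝ) (ha : a < 0) (hm : m < 0)
    (x z θ : ℝ → ℝ)
    (hx_pos : ∀ s, 0 < x s)
    (hx : ∀ s, HasDerivAt x (Real.cos (θ s)) s)
    (hz : ∀ s, HasDerivAt z (Real.sin (θ s)) s)
    (hθ : ∀ s, HasDerivAt θ (a * Real.sin (θ s) / x s) s)
    (hanti : StrictAnti θ)
    (hθlim : Tendsto θ atTop (𝓝 θ₁)) (hθ₁ : 0 ≤ θ₁)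
    (hfi : ∀ s, (Real.cos (θ s)) ^ 2 = 1 + m * x s ^ (2 * a : ℝ))
    (hcos : 0 < Real.cos θ₁) :
    Tendsto x atTop atTop ∧
    Tendsto (fun s => a * Real.sin (θ s) / x s) atTop (𝓝 0) ∧
    ∃ C : ℝ, ∀ s, |a * Real.sin (θ s) / x s| ≤ C := by
  -- lower bound on x
  set δ : ℝ := ((-m)⁻¹) ^ ((2 * a)⁻¹) with hδ
  have hmpos : (0:ℝ) < -m := by linarith
  have hδpos : 0 < δ := Real.rpow_pos_of_pos (by positivity) _
  have h2a : (2 * a : ℝ) < 0 := by linarith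
  have hxlb : ∀ s, δ ≤ x s := by
    intro s
    have h0 : (0:ℝ) ≤ 1 + m * x s ^ (2 * a : ℝ) := (hfi s) ▸ sq_nonneg _
    have ht : x s ^ (2 * a : ℝ) ≤ (-m)⁻¹ := by
      rw [inv_eq_one_div, le_div_iff₀ hmpos]; nlinarith
    have hδ2a : δ ^ (2 * a : ℝ) = (-m)⁻¹ :=
      Real.rpow_inv_rpow (by positivity) h2a.ne
    have := (Real.rpow_le_rpow_iff_of_neg (hx_pos s) hδpos h2a).mp (by rw [hδ2a]; exact ht)
    exact this
  -- x tends to atTop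
  have hcosθ : Tendsto (fun s => Real.cos (θ s)) atTop (𝓝 (Real.cos θ₁)) :=
    (Real.continuous_cos.tendsto _).comp hθlim
  obtain ⟨s₀, hs₀⟩ : ∃ s₀, ∀ s ≥ s₀, Real.cos θ₁ / 2 ≤ Real.cos (θ s) := by
    have := hcosθ.eventually (eventually_ge_nhds (by linarith : Real.cos θ₁ / 2 < Real.cos θ₁))
    exact eventually_atTop.mp this
  have hmono : ∀ s ≥ s₀, x s₀ + Real.cos θ₁ / 2 * (s - s₀) ≤ x s := by
    intro s hs
    have hmon : MonotoneOn (fun t => x t - Real.cos θ₁ / 2 * t) (Set.Ici s₀) := by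
      apply monotoneOn_of_deriv_nonneg (convex_Ici _)
      · exact Continuous.continuousOn (by
          have : Differentiable ℝ x := fun t => (hx t).differentiableAt
          have := this.continuous
          fun_prop)
      · intro t ht
        exact ((hx t).sub ((hasDerivAt_id t).const_mul _)).differentiableAt.differentiableWithinAt
      · intro t ht
        rw [interior_Ici] at ht
        have : deriv (fun t => x t - Real.cos θ₁ / 2 * t) t = Real.cos (θ t) - Real.cos θ₁ / 2 := by
          have := ((hx t).sub (((hasDerivAt_id t).const_mul (Real.cos θ₁ / 2)))).deriv
          simp only [id_eq, mul_one] at this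
          exact this
        rw [this]
        have := hs₀ t (le_of_lt ht)
        linarith
    have := hmon (Set.self_mem_Ici) (Set.mem_Ici.mpr hs) hs
    simp only at this
    linarith
  have hxtop : Tendsto x atTop atTop := by
    apply tendsto_atTop_mono' atTop (eventually_atTop.mpr ⟨s₀, hmono⟩)
    have : Tendsto (fun s => Real.cos θ₁ / 2 * (s - s₀)) atTop atTop :=
      (tendsto_atTop_add_const_right _ _ tendsto_id).const_mul_atTop (by linarith)
    exact tendsto_atTop_add_const_left _ _ this
  refine ⟨hxtop, ?_, ?_⟩
  · have hnum : Tendsto (fun s => a * Real.sin (θ s)) atTop (𝓝 (a * Real.sin θ₁)) :=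
      ((Real.continuous_sin.tendsto _).comp hθlim).const_mul a
    exact hnum.div_atTop hxtop
  · refine ⟨|a| / δ, fun s => ?_⟩
    rw [abs_div]
    rw [abs_of_pos (hx_pos s)]
    apply div_le_div₀ (abs_nonneg a) ?_ hδpos (hxlb s)
    calc |a * Real.sin (θ s)| = |a| * |Real.sin (θ s)| := abs_mul _ _
      _ ≤ |a| * 1 := by
          exact mul_le_mul_of_nonneg_left (Real.abs_sin_le_one _) (abs_nonneg a)
      _ = |a| := mul_one _
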